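/- arXiv:2412.10842 — 5 statements merged into one kernel-verified Lean document; each statement's English description precedes it below -/
import Mathlib

section
/- Let n ≥ 1 and let p : 𝔽₂ⁿ → 𝔽₂ be a polynomial of degree at most 2. Then for every k ≥ 0, the k-th Fourier weight of f(x) = (−1)^{p(x)} satisfies ∑_{A ⊆ [n], |A| = k} |f̂(A)| ≤ (1 + √2)^k. -/
/-- The Fourier coefficient `f̂(A) = 2^{-n} ∑_{x ∈ 𝔽₂ⁿ} f(x) (-1)^{x_A}`,
where `x_A = ∑_{i ∈ A} x_i ∈ 𝔽₂`. -/
noncomputable def fCoeff {n : ℕ} (f : (Fin n → ZMod 2) → ℝ) (A : Finset (Fin n)) : ℝ :=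
  (1 / 2 ^ n) * ∑ x : Fin n → ZMod 2, f x * (-1 : ℝ) ^ (∑ i ∈ A, x i).val

/-- `p : 𝔽₂ⁿ → 𝔽₂` is a polynomial of degree at most 2, i.e.
`p(x) = ∑_{i < j} a_{ij} x_i x_j + ∑ b_i x_i + c`. -/
def IsDegreeLE2 {n : ℕ} (p : (Fin n → ZMod 2) → ZMod 2) : Prop :=
  ∃ (a : Fin n → Fin n → ZMod 2) (b : Fin n → ZMod 2) (c : ZMod 2),
    ∀ x, p x = (∑ i : Fin n, ∑ j : Fin n, if i < j then a i j * x i * x j else 0)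
      + (∑ i : Fin n, b i * x i) + c

open Finset
open scoped symmDiff

noncomputable def chi (a : ZMod 2) : ℝ := (-1) ^ a.val

lemma zmod2_cases (a : ZMod 2) : a = 0 ∨ a = 1 := by revert a; decide
lemma chi_zero : chi 0 = 1 := by norm_num [chi]
lemma chi_one : chi 1 = -1 := by norm_num [chi, show ((1 : ZMod 2)).val = 1 from rfl]
lemma chi_add (a b : ZMod 2) : chi (a + b) = chi a * chi b := by
  rcases zmod2_cases a with ha | ha <;> rcases zmod2_cases b with hb | hb <;>
    subst ha <;> subst hb <;>
    norm_num [chi, show (1 + 1 : ZMod 2) = 0 from rfl,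
      show ((2 : ZMod 2)).val = 0 from rfl, show ((1 : ZMod 2)).val = 1 from rfl]
lemma chi_sq (a : ZMod 2) : chi a * chi a = 1 := by
  rw [← chi_add]
  rcases zmod2_cases a with h | h <;> subst h <;>
    norm_num [chi, show (1 + 1 : ZMod 2) = 0 from rfl,
      show ((2 : ZMod 2)).val = 0 from rfl]
lemma chi_cancel (a b : ZMod 2) : chi a * chi (a + b) = chi b := by
  rw [chi_add, ← mul_assoc, chi_sq, one_mul]
lemma chi_sum {ι : Type*} (s : Finset ι) (g : ι → ZMod 2) :
    chi (∑ i ∈ s, g i) = ∏ i ∈ s, chi (g i) := by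
  induction s using Finset.cons_induction with
  | empty => simp [chi_zero]
  | cons i s hi ih => rw [Finset.sum_cons, Finset.prod_cons, chi_add, ih]

lemma pi_add_self {n : ℕ} (z : Fin n → ZMod 2) : z + z = 0 := by
  ext i
  rcases zmod2_cases (z i) with h | h <;>
    simp [h, show (1 + 1 : ZMod 2) = 0 from rfl]

/-- Orthogonality: sum of the character over all subsets. -/
lemma sum_chi_all {n : ℕ} (z : Fin n → ZMod 2) :
    ∑ A : Finset (Fin n), chi (∑ i ∈ A, z i)
      = if z = 0 then (2 : ℝ) ^ n else 0 := by
  have h1 : ∑ A : Finset (Fin n), chi (∑ i ∈ A, z i)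
      = ∑ A ∈ (Finset.univ : Finset (Fin n)).powerset, ∏ i ∈ A, chi (z i) := by
    rw [Finset.powerset_univ]
    exact Finset.sum_congr rfl fun A _ => chi_sum A _
  have h2 : ∏ i : Fin n, (chi (z i) + 1)
      = ∑ A ∈ (Finset.univ : Finset (Fin n)).powerset, ∏ i ∈ A, chi (z i) := by
    rw [Finset.prod_add]
    exact Finset.sum_congr rfl fun A _ => by simp
  rw [h1, ← h2]
  by_cases hz : z = 0
  · subst hz
    simp [chi_zero]
    norm_num
  · rw [if_neg hz]
    obtain ⟨i, hi⟩ : ∃ i, z i ≠ 0 := by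
      by_contra h
      push_neg at h
      exact hz (funext h)
    apply Finset.prod_eq_zero (Finset.mem_univ i)
    rcases zmod2_cases (z i) with h | h
    · exact absurd h hi
    · rw [h, chi_one]; ring

/-- Pairing: a character sum over a translation-closed set vanishes. -/
lemma sum_chi_eq_zero {n : ℕ} (s : Finset (Fin n → ZMod 2))
    (φ : (Fin n → ZMod 2) → ZMod 2) (z₀ : Fin n → ZMod 2)
    (hs : ∀ z ∈ s, z + z₀ ∈ s) (hφ : ∀ z ∈ s, φ (z + z₀) = φ z + 1) :
    ∑ z ∈ s, chi (φ z) = 0 := by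
  have key : ∑ z ∈ s, chi (φ z) = ∑ z ∈ s, chi (φ (z + z₀)) := by
    apply Finset.sum_bij' (fun z _ => z + z₀) (fun z _ => z + z₀)
    · exact hs
    · exact hs
    · intro z hz
      rw [add_assoc, pi_add_self, add_zero]
    · intro z hz
      rw [add_assoc, pi_add_self, add_zero]
    · intro z hz
      rw [add_assoc, pi_add_self, add_zero]
  have key2 : ∑ z ∈ s, chi (φ (z + z₀)) = - ∑ z ∈ s, chi (φ z) := by
    rw [← Finset.sum_neg_distrib]
    apply Finset.sum_congr rfl
    intro z hz
    rw [hφ z hz, chi_add, chi_one]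
    ring
  have := key.trans key2
  linarith

lemma symmDiff_erase_mem {ι : Type*} [DecidableEq ι] (i : ι) (A B D : Finset ι)
    (hA : i ∈ A) (hB : i ∈ B) (hD : i ∈ D) :
    (A.erase i ∆ B.erase i) ∆ D.erase i = ((A ∆ B) ∆ D).erase i := by
  ext x
  by_cases hx : x = i
  · subst hx; simp [Finset.mem_symmDiff, hA, hB, hD]
  · simp [Finset.mem_symmDiff, Finset.mem_erase, hx]

lemma counting {ι : Type*} [DecidableEq ι] (t : ℝ) (ht0 : 0 ≤ t) (ht1 : t ≤ 1)
    (h2 : (1 + t) ^ 2 ≤ 2) (u : Finset ι) :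
    ∀ (C : Finset (Finset ι)), C.Nonempty → (∀ A ∈ C, A ⊆ u) →
      (∀ A ∈ C, ∀ B ∈ C, ∀ D ∈ C, (A ∆ B) ∆ D ∈ C) →
      ∑ A ∈ C, t ^ A.card ≤ Real.sqrt C.card := by
  induction u using Finset.induction_on with
  | empty =>
    intro C hne hsub _
    have hC : C = {∅} := by
      apply Finset.eq_singleton_iff_nonempty_unique_mem.2
      exact ⟨hne, fun A hA => Finset.subset_empty.1 (hsub A hA)⟩
    subst hC; simp
  | @insert i u hi ih =>
    intro C hne hsub hcl
    classical
    set C₀ : Finset (Finset ι) := C.filter (fun A => i ∉ A) with hC₀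
    set Cm : Finset (Finset ι) := C.filter (fun A => i ∈ A) with hCm
    set C₁ : Finset (Finset ι) := Cm.image (fun A => A.erase i) with hC₁
    have hsplitsum : ∑ A ∈ C, t ^ A.card
        = ∑ A ∈ C₀, t ^ A.card + ∑ A ∈ Cm, t ^ A.card := by
      rw [hC₀, hCm, ← Finset.sum_filter_add_sum_filter_not C (fun A => i ∉ A)
        (fun A => t ^ A.card)]
      simp [not_not]
    have hinj : Set.InjOn (fun A : Finset ι => A.erase i) ↑Cm := by
      intro A hA B hB hAB
      have hiA : i ∈ A := (Finset.mem_filter.1 hA).2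
      have hiB : i ∈ B := (Finset.mem_filter.1 hB).2
      have := congrArg (insert i) hAB
      simpa [Finset.insert_erase hiA, Finset.insert_erase hiB] using this
    have hcard1 : C₁.card = Cm.card := Finset.card_image_of_injOn hinj
    have hsum1 : ∑ A ∈ Cm, t ^ A.card = t * ∑ A ∈ C₁, t ^ A.card := by
      rw [hC₁, Finset.sum_image hinj, Finset.mul_sum]
      apply Finset.sum_congr rfl
      intro A hA
      have hiA : i ∈ A := (Finset.mem_filter.1 hA).2
      rw [Finset.card_erase_of_mem hiA]
      have : 1 ≤ A.card := Finset.card_pos.2 ⟨i, hiA⟩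
      rw [← pow_succ']
      congr 1; omega
    -- closure and subset facts
    have hsub0 : ∀ A ∈ C₀, A ⊆ u := by
      intro A hA
      have h1 := hsub A (Finset.mem_filter.1 hA).1
      have h2 := (Finset.mem_filter.1 hA).2
      intro x hx
      rcases Finset.mem_insert.1 (h1 hx) with h | h
      · exact absurd (h ▸ hx) h2
      · exact h
    have hcl0 : ∀ A ∈ C₀, ∀ B ∈ C₀, ∀ D ∈ C₀, (A ∆ B) ∆ D ∈ C₀ := by
      intro A hA B hB D hD
      simp only [hC₀, Finset.mem_filter] at *
      refine ⟨hcl _ hA.1 _ hB.1 _ hD.1, ?_⟩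
      simp [Finset.mem_symmDiff, hA.2, hB.2, hD.2]
    have hsub1 : ∀ A ∈ C₁, A ⊆ u := by
      intro A hA
      rcases Finset.mem_image.1 hA with ⟨B, hB, rfl⟩
      have h1 := hsub B (Finset.mem_filter.1 hB).1
      intro x hx
      have hxi := Finset.mem_erase.1 hx
      rcases Finset.mem_insert.1 (h1 hxi.2) with h | h
      · exact absurd h hxi.1
      · exact h
    have hcl1 : ∀ A ∈ C₁, ∀ B ∈ C₁, ∀ D ∈ C₁, (A ∆ B) ∆ D ∈ C₁ := by
      intro A hA B hB D hD
      rcases Finset.mem_image.1 hA with ⟨A', hA', rfl⟩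
      rcases Finset.mem_image.1 hB with ⟨B', hB', rfl⟩
      rcases Finset.mem_image.1 hD with ⟨D', hD', rfl⟩
      have hiA := (Finset.mem_filter.1 hA').2
      have hiB := (Finset.mem_filter.1 hB').2
      have hiD := (Finset.mem_filter.1 hD').2
      rw [symmDiff_erase_mem i _ _ _ hiA hiB hiD]
      apply Finset.mem_image.2
      refine ⟨(A' ∆ B') ∆ D', ?_, rfl⟩
      apply Finset.mem_filter.2
      refine ⟨hcl _ (Finset.mem_filter.1 hA').1 _ (Finset.mem_filter.1 hB').1 _
        (Finset.mem_filter.1 hD').1, ?_⟩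
      simp [Finset.mem_symmDiff, hiA, hiB, hiD]
    have hcardsplit : C.card = C₀.card + Cm.card := by
      have h := Finset.card_filter_add_card_filter_not (s := C) (p := fun A => i ∉ A)
      simp only [not_not] at h
      rw [hC₀, hCm]; omega
    rcases Finset.eq_empty_or_nonempty C₀ with h0 | h0
    · -- all sets contain i
      have hCmne : Cm.Nonempty := by
        rw [← Finset.card_pos]
        have h1 := hne.card_pos
        have h2' : C₀.card = 0 := by rw [h0]; rfl
        omega
      have hC1ne : C₁.Nonempty := by rw [← Finset.card_pos, hcard1]; exact hCmne.card_pos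
      have hih := ih C₁ hC1ne hsub1 hcl1
      have hcc : C.card = C₁.card := by rw [hcard1]; rw [h0] at hcardsplit; simpa using hcardsplit
      rw [hsplitsum, h0, hsum1]
      simp only [Finset.sum_empty, zero_add, hcc]
      calc t * ∑ A ∈ C₁, t ^ A.card ≤ 1 * ∑ A ∈ C₁, t ^ A.card := by
            apply mul_le_mul_of_nonneg_right ht1
            exact Finset.sum_nonneg fun A _ => pow_nonneg ht0 _
        _ = ∑ A ∈ C₁, t ^ A.card := one_mul _
        _ ≤ _ := hih
    rcases Finset.eq_empty_or_nonempty Cm with hm | hm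
    · have hcc : C.card = C₀.card := by rw [hm] at hcardsplit; simpa using hcardsplit
      rw [hsplitsum, hm]
      simp only [Finset.sum_empty, add_zero, hcc]
      exact ih C₀ h0 hsub0 hcl0
    · -- both nonempty: equal halves
      obtain ⟨P, hP⟩ := h0
      obtain ⟨Q, hQ⟩ := hm
      have hPC : P ∈ C := (Finset.mem_filter.1 hP).1
      have hQC : Q ∈ C := (Finset.mem_filter.1 hQ).1
      have hiP : i ∉ P := (Finset.mem_filter.1 hP).2
      have hiQ : i ∈ Q := (Finset.mem_filter.1 hQ).2
      have hcards : C₀.card = Cm.card := by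
        apply Finset.card_bij' (fun A _ => (A ∆ P) ∆ Q) (fun B _ => (B ∆ P) ∆ Q)
        · intro A hA
          apply Finset.mem_filter.2
          refine ⟨hcl _ (Finset.mem_filter.1 hA).1 _ hPC _ hQC, ?_⟩
          have hiA := (Finset.mem_filter.1 hA).2
          simp [Finset.mem_symmDiff, hiA, hiP, hiQ]
        · intro B hB
          apply Finset.mem_filter.2
          refine ⟨hcl _ (Finset.mem_filter.1 hB).1 _ hPC _ hQC, ?_⟩
          have hiB := (Finset.mem_filter.1 hB).2
          simp [Finset.mem_symmDiff, hiB, hiP, hiQ]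
        · intro A _
          rw [symmDiff_right_comm, symmDiff_symmDiff_cancel_right,
            symmDiff_symmDiff_cancel_right]
        · intro B _
          rw [symmDiff_right_comm, symmDiff_symmDiff_cancel_right,
            symmDiff_symmDiff_cancel_right]
      have hc2 : (C.card : ℝ) = 2 * (C₀.card : ℝ) := by
        rw [hcardsplit, ← hcards]; push_cast; ring
      have hih0 := ih C₀ ⟨P, hP⟩ hsub0 hcl0
      have hih1 := ih C₁ (by rw [← Finset.card_pos, hcard1]; exact Finset.card_pos.2 ⟨Q, hQ⟩) hsub1 hcl1
      have hsqrt2 : 1 + t ≤ Real.sqrt 2 := by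
        nlinarith [Real.sq_sqrt (show (0:ℝ) ≤ 2 by norm_num), Real.sqrt_nonneg 2]
      have hc1c0 : (C₁.card : ℝ) = (C₀.card : ℝ) := by rw [hcard1, hcards]
      rw [hsplitsum, hsum1]
      calc ∑ A ∈ C₀, t ^ A.card + t * ∑ A ∈ C₁, t ^ A.card
          ≤ Real.sqrt C₀.card + t * Real.sqrt C₁.card := by
            apply add_le_add hih0
            exact mul_le_mul_of_nonneg_left hih1 ht0
        _ = (1 + t) * Real.sqrt C₀.card := by rw [hc1c0]; ring
        _ ≤ Real.sqrt 2 * Real.sqrt C₀.card := by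
            apply mul_le_mul_of_nonneg_right hsqrt2 (Real.sqrt_nonneg _)
        _ = Real.sqrt (2 * C₀.card) := by rw [Real.sqrt_mul (by norm_num)]
        _ = Real.sqrt C.card := by rw [hc2]

lemma fCoeff_eq {n : ℕ} (f : (Fin n → ZMod 2) → ℝ) (A : Finset (Fin n)) :
    fCoeff f A = (1 / 2 ^ n) * ∑ x : Fin n → ZMod 2, f x * chi (∑ i ∈ A, x i) := rfl

lemma sq_sum {n : ℕ} (f : (Fin n → ZMod 2) → ℝ) (A : Finset (Fin n)) :
    (∑ x : Fin n → ZMod 2, f x * chi (∑ i ∈ A, x i)) ^ 2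
      = ∑ z : Fin n → ZMod 2,
          (∑ x : Fin n → ZMod 2, f x * f (x + z)) * chi (∑ i ∈ A, z i) := by
  rw [sq, Finset.sum_mul_sum]
  have step : ∀ x : Fin n → ZMod 2,
      ∑ y : Fin n → ZMod 2, (f x * chi (∑ i ∈ A, x i)) * (f y * chi (∑ i ∈ A, y i))
        = ∑ z : Fin n → ZMod 2, f x * f (x + z) * chi (∑ i ∈ A, z i) := by
    intro x
    rw [← Equiv.sum_comp (Equiv.addLeft x)
      (fun y => (f x * chi (∑ i ∈ A, x i)) * (f y * chi (∑ i ∈ A, y i)))]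
    apply Finset.sum_congr rfl
    intro z _
    have hxz : (Equiv.addLeft x) z = x + z := rfl
    rw [hxz]
    have hsum : (∑ i ∈ A, (x + z) i) = (∑ i ∈ A, x i) + (∑ i ∈ A, z i) := by
      rw [← Finset.sum_add_distrib]
      exact Finset.sum_congr rfl fun i _ => rfl
    rw [hsum]
    have := chi_cancel (∑ i ∈ A, x i) (∑ i ∈ A, z i)
    linear_combination (f x * f (x + z)) * this
  calc ∑ x : Fin n → ZMod 2, ∑ y : Fin n → ZMod 2,
          (f x * chi (∑ i ∈ A, x i)) * (f y * chi (∑ i ∈ A, y i))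
      = ∑ x : Fin n → ZMod 2, ∑ z : Fin n → ZMod 2,
          f x * f (x + z) * chi (∑ i ∈ A, z i) := Finset.sum_congr rfl fun x _ => step x
    _ = ∑ z : Fin n → ZMod 2, ∑ x : Fin n → ZMod 2,
          f x * f (x + z) * chi (∑ i ∈ A, z i) := Finset.sum_comm
    _ = ∑ z : Fin n → ZMod 2,
          (∑ x : Fin n → ZMod 2, f x * f (x + z)) * chi (∑ i ∈ A, z i) := by
        exact Finset.sum_congr rfl fun z _ => (Finset.sum_mul _ _ _).symm

lemma parseval {n : ℕ} (f : (Fin n → ZMod 2) → ℝ) (hf : ∀ x, f x * f x = 1) :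
    ∑ A : Finset (Fin n), (fCoeff f A) ^ 2 = 1 := by
  have h1 : ∀ A : Finset (Fin n), (fCoeff f A) ^ 2
      = (1 / 2 ^ n) ^ 2 * ∑ z : Fin n → ZMod 2,
          (∑ x : Fin n → ZMod 2, f x * f (x + z)) * chi (∑ i ∈ A, z i) := by
    intro A
    rw [fCoeff_eq, mul_pow, sq_sum]
  calc ∑ A : Finset (Fin n), (fCoeff f A) ^ 2
      = (1 / 2 ^ n : ℝ) ^ 2 * ∑ A : Finset (Fin n), ∑ z : Fin n → ZMod 2,
          (∑ x : Fin n → ZMod 2, f x * f (x + z)) * chi (∑ i ∈ A, z i) := by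
        rw [Finset.mul_sum]
        exact Finset.sum_congr rfl fun A _ => h1 A
    _ = (1 / 2 ^ n : ℝ) ^ 2 * ∑ z : Fin n → ZMod 2,
          (∑ x : Fin n → ZMod 2, f x * f (x + z)) *
            ∑ A : Finset (Fin n), chi (∑ i ∈ A, z i) := by
        rw [Finset.sum_comm]
        congr 1
        exact Finset.sum_congr rfl fun z _ => (Finset.mul_sum _ _ _).symm
    _ = 1 := by
        rw [Finset.sum_eq_single (0 : Fin n → ZMod 2)]
        · rw [sum_chi_all]
          simp only [if_pos rfl, ↓reduceIte]
          have : ∑ x : Fin n → ZMod 2, f x * f (x + 0) = (2 : ℝ) ^ n := by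
            rw [show ∑ x : Fin n → ZMod 2, f x * f (x + 0)
                = ∑ x : Fin n → ZMod 2, (1 : ℝ) from
              Finset.sum_congr rfl fun x _ => by rw [add_zero]; exact hf x]
            simp [Finset.card_univ]
          rw [this]
          have h2n : ((2 : ℝ) ^ n) ≠ 0 := by positivity
          field_simp
        · intro z _ hz
          rw [sum_chi_all, if_neg hz, mul_zero]
        · intro h
          exact absurd (Finset.mem_univ _) h

def Qform {n : ℕ} (a : Fin n → Fin n → ZMod 2) (x z : Fin n → ZMod 2) : ZMod 2 :=
  ∑ i : Fin n, ∑ j : Fin n, if i < j then a i j * (x i * z j + z i * x j) else 0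

lemma Qform_add_left {n : ℕ} (a : Fin n → Fin n → ZMod 2) (x y z : Fin n → ZMod 2) :
    Qform a (x + y) z = Qform a x z + Qform a y z := by
  unfold Qform
  rw [← Finset.sum_add_distrib]
  apply Finset.sum_congr rfl
  intro i _
  rw [← Finset.sum_add_distrib]
  apply Finset.sum_congr rfl
  intro j _
  split_ifs with h
  · simp only [Pi.add_apply]; ring
  · rw [add_zero]

lemma Qform_symm {n : ℕ} (a : Fin n → Fin n → ZMod 2) (x z : Fin n → ZMod 2) :
    Qform a x z = Qform a z x := by
  unfold Qform
  apply Finset.sum_congr rfl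
  intro i _
  apply Finset.sum_congr rfl
  intro j _
  split_ifs with h
  · ring
  · rfl

lemma Qform_add_right {n : ℕ} (a : Fin n → Fin n → ZMod 2) (x z w : Fin n → ZMod 2) :
    Qform a x (z + w) = Qform a x z + Qform a x w := by
  rw [Qform_symm, Qform_add_left, Qform_symm a z, Qform_symm a w]

lemma p_zero {n : ℕ} (p : (Fin n → ZMod 2) → ZMod 2)
    (a : Fin n → Fin n → ZMod 2) (b : Fin n → ZMod 2) (c : ZMod 2)
    (hpc : ∀ x, p x = (∑ i : Fin n, ∑ j : Fin n, if i < j then a i j * x i * x j else 0)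
      + (∑ i : Fin n, b i * x i) + c) : p 0 = c := by
  simp [hpc]

lemma p_add {n : ℕ} (p : (Fin n → ZMod 2) → ZMod 2)
    (a : Fin n → Fin n → ZMod 2) (b : Fin n → ZMod 2) (c : ZMod 2)
    (hpc : ∀ x, p x = (∑ i : Fin n, ∑ j : Fin n, if i < j then a i j * x i * x j else 0)
      + (∑ i : Fin n, b i * x i) + c) (x z : Fin n → ZMod 2) :
    p (x + z) = p x + p z + p 0 + Qform a x z := by
  rw [p_zero p a b c hpc]
  simp only [hpc, Pi.add_apply]
  have e1 : ∑ i : Fin n, ∑ j : Fin n,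
        (if i < j then a i j * (x i + z i) * (x j + z j) else 0)
      = (∑ i : Fin n, ∑ j : Fin n, if i < j then a i j * x i * x j else 0)
        + (∑ i : Fin n, ∑ j : Fin n, if i < j then a i j * z i * z j else 0)
        + Qform a x z := by
    unfold Qform
    rw [← Finset.sum_add_distrib, ← Finset.sum_add_distrib]
    apply Finset.sum_congr rfl
    intro i _
    rw [← Finset.sum_add_distrib, ← Finset.sum_add_distrib]
    apply Finset.sum_congr rfl
    intro j _
    split_ifs with h
    · ring
    · simp
  have e2 : ∑ i : Fin n, b i * (x i + z i)
      = (∑ i : Fin n, b i * x i) + (∑ i : Fin n, b i * z i) := by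
    rw [← Finset.sum_add_distrib]
    exact Finset.sum_congr rfl fun i _ => by ring
  rw [e1, e2]
  clear e1 e2 hpc
  generalize (∑ i : Fin n, ∑ j : Fin n, if i < j then a i j * x i * x j else 0) = s1
  generalize (∑ i : Fin n, ∑ j : Fin n, if i < j then a i j * z i * z j else 0) = s2
  generalize Qform a x z = q
  generalize (∑ i : Fin n, b i * x i) = l1
  generalize (∑ i : Fin n, b i * z i) = l2
  revert s1 s2 q l1 l2 c
  decide

lemma sum_symmDiff_zmod2 {ι : Type*} [DecidableEq ι] (A B : Finset ι) (g : ι → ZMod 2) :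
    ∑ i ∈ A ∆ B, g i = ∑ i ∈ A, g i + ∑ i ∈ B, g i := by
  have hset : A ∆ B = (A ∪ B) \ (A ∩ B) := by
    ext x; simp [Finset.mem_symmDiff]; tauto
  have h1 : ∑ i ∈ A ∪ B, g i + ∑ i ∈ A ∩ B, g i = ∑ i ∈ A, g i + ∑ i ∈ B, g i :=
    Finset.sum_union_inter
  have h2 : ∑ i ∈ (A ∪ B) \ (A ∩ B), g i + ∑ i ∈ A ∩ B, g i = ∑ i ∈ A ∪ B, g i :=
    Finset.sum_sdiff (Finset.inter_subset_union)
  have h4 : ∑ i ∈ A ∩ B, g i + ∑ i ∈ A ∩ B, g i = 0 := by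
    rcases zmod2_cases (∑ i ∈ A ∩ B, g i) with h | h <;> rw [h] <;> rfl
  rw [hset]
  linear_combination h1 + h2 - h4

lemma quadSpectrum {n : ℕ} (p : (Fin n → ZMod 2) → ZMod 2) (hp : IsDegreeLE2 p) :
    ∃ (m : ℝ) (S : Finset (Finset (Fin n))), 0 ≤ m ∧ S.Nonempty ∧
      (∀ A : Finset (Fin n),
        |fCoeff (fun x => (-1 : ℝ) ^ (p x).val) A| = if A ∈ S then m else 0) ∧
      (∀ A ∈ S, ∀ B ∈ S, ∀ D ∈ S, (A ∆ B) ∆ D ∈ S) ∧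
      (S.card : ℝ) * m ^ 2 = 1 := by
  classical
  obtain ⟨a, b, c, hpc⟩ := hp
  set f : (Fin n → ZMod 2) → ℝ := fun x => (-1 : ℝ) ^ (p x).val with hf
  have hfchi : ∀ x, f x = chi (p x) := fun _ => rfl
  have hf1 : ∀ x, f x * f x = 1 := by
    intro x; rw [hfchi]; exact chi_sq _
  set K : Finset (Fin n → ZMod 2) :=
    Finset.univ.filter (fun z => ∀ x, Qform a x z = 0) with hK
  set S : Finset (Finset (Fin n)) :=
    Finset.univ.filter
      (fun A : Finset (Fin n) => ∀ z ∈ K, p z + p 0 + ∑ i ∈ A, z i = 0) with hS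
  -- autocorrelation
  have corr : ∀ z : Fin n → ZMod 2, ∑ x : Fin n → ZMod 2, f x * f (x + z)
      = if z ∈ K then (2 : ℝ) ^ n * chi (p z + p 0) else 0 := by
    intro z
    have hterm : ∀ x, f x * f (x + z) = chi (p z + p 0) * chi (Qform a x z) := by
      intro x
      rw [hfchi, hfchi]
      have hadd : p (x + z) = p x + (p z + p 0 + Qform a x z) := by
        rw [p_add p a b c hpc x z]; ring
      rw [hadd, chi_cancel, chi_add, chi_add]
    rw [show ∑ x : Fin n → ZMod 2, f x * f (x + z)
        = chi (p z + p 0) * ∑ x : Fin n → ZMod 2, chi (Qform a x z) by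
      rw [Finset.mul_sum]; exact Finset.sum_congr rfl fun x _ => hterm x]
    by_cases hzK : z ∈ K
    · rw [if_pos hzK]
      have hQ0 : ∀ x, Qform a x z = 0 := (Finset.mem_filter.1 hzK).2
      rw [show ∑ x : Fin n → ZMod 2, chi (Qform a x z) = (2 : ℝ) ^ n by
        rw [show ∑ x : Fin n → ZMod 2, chi (Qform a x z)
            = ∑ _x : Fin n → ZMod 2, (1 : ℝ) from
          Finset.sum_congr rfl fun x _ => by rw [hQ0 x, chi_zero]]
        simp [Finset.card_univ]]
      ring
    · rw [if_neg hzK]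
      have hex : ∃ x₀, Qform a x₀ z ≠ 0 := by
        by_contra h
        push_neg at h
        exact hzK (Finset.mem_filter.2 ⟨Finset.mem_univ _, h⟩)
      obtain ⟨x₀, hx₀⟩ := hex
      have hx₀1 : Qform a x₀ z = 1 := by
        rcases zmod2_cases (Qform a x₀ z) with h | h
        · exact absurd h hx₀
        · exact h
      have hzero : ∑ x : Fin n → ZMod 2, chi (Qform a x z) = 0 := by
        apply sum_chi_eq_zero Finset.univ (fun x => Qform a x z) x₀
        · intro _ _; exact Finset.mem_univ _
        · intro x _
          rw [Qform_add_left, hx₀1]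
      rw [hzero, mul_zero]
  -- squared Fourier coefficients
  have hsq : ∀ A : Finset (Fin n), fCoeff f A ^ 2
      = if A ∈ S then (K.card : ℝ) / 2 ^ n else 0 := by
    intro A
    have h0 : fCoeff f A = (1 / 2 ^ n) * ∑ x : Fin n → ZMod 2, f x * chi (∑ i ∈ A, x i) := rfl
    rw [h0, mul_pow, sq_sum]
    have h1 : ∑ z : Fin n → ZMod 2,
        (∑ x : Fin n → ZMod 2, f x * f (x + z)) * chi (∑ i ∈ A, z i)
        = (2 : ℝ) ^ n * ∑ z ∈ K, chi (p z + p 0 + ∑ i ∈ A, z i) := by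
      rw [Finset.mul_sum]
      rw [← Finset.sum_filter_add_sum_filter_not Finset.univ (fun z => z ∈ K)]
      have hz2 : ∀ z ∈ Finset.univ.filter (fun z => z ∉ K),
          (∑ x : Fin n → ZMod 2, f x * f (x + z)) * chi (∑ i ∈ A, z i) = 0 := by
        intro z hz
        rw [corr z, if_neg (Finset.mem_filter.1 hz).2, zero_mul]
      rw [Finset.sum_eq_zero hz2, add_zero]
      have hKfilter : Finset.univ.filter (fun z => z ∈ K) = K := by
        ext z; simp
      rw [hKfilter]
      apply Finset.sum_congr rfl
      intro z hz
      rw [corr z, if_pos hz, chi_add, chi_add, chi_add]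
      ring
    rw [h1]
    by_cases hAS : A ∈ S
    · rw [if_pos hAS]
      have hall : ∀ z ∈ K, p z + p 0 + ∑ i ∈ A, z i = 0 := (Finset.mem_filter.1 hAS).2
      rw [show ∑ z ∈ K, chi (p z + p 0 + ∑ i ∈ A, z i) = (K.card : ℝ) by
        rw [show ∑ z ∈ K, chi (p z + p 0 + ∑ i ∈ A, z i) = ∑ _z ∈ K, (1 : ℝ) from
          Finset.sum_congr rfl fun z hz => by rw [hall z hz, chi_zero]]
        simp]
      have h2n : ((2 : ℝ) ^ n) ≠ 0 := by positivity
      field_simp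
    · rw [if_neg hAS]
      have hex : ∃ z₀ ∈ K, p z₀ + p 0 + ∑ i ∈ A, z₀ i ≠ 0 := by
        by_contra h
        push_neg at h
        exact hAS (Finset.mem_filter.2 ⟨Finset.mem_univ _, h⟩)
      obtain ⟨z₀, hz₀K, hz₀⟩ := hex
      have hz₀1 : p z₀ + p 0 + ∑ i ∈ A, z₀ i = 1 := by
        rcases zmod2_cases (p z₀ + p 0 + ∑ i ∈ A, z₀ i) with h | h
        · exact absurd h hz₀
        · exact h
      have hzero : ∑ z ∈ K, chi (p z + p 0 + ∑ i ∈ A, z i) = 0 := by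
        apply sum_chi_eq_zero K (fun z => p z + p 0 + ∑ i ∈ A, z i) z₀
        · intro z hz
          apply Finset.mem_filter.2
          refine ⟨Finset.mem_univ _, ?_⟩
          intro x
          rw [Qform_add_right, (Finset.mem_filter.1 hz).2 x, (Finset.mem_filter.1 hz₀K).2 x,
            add_zero]
        · intro z hz
          have hQzz₀ : Qform a z z₀ = 0 := (Finset.mem_filter.1 hz₀K).2 z
          have hsumadd : (∑ i ∈ A, (z + z₀) i) = (∑ i ∈ A, z i) + (∑ i ∈ A, z₀ i) := by
            rw [← Finset.sum_add_distrib]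
            exact Finset.sum_congr rfl fun i _ => rfl
          rw [← hz₀1]
          rw [p_add p a b c hpc z z₀, hQzz₀, hsumadd]
          generalize p z = u
          generalize p z₀ = v
          generalize p 0 = w
          generalize (∑ i ∈ A, z i) = s
          generalize (∑ i ∈ A, z₀ i) = s'
          revert u v w s s'
          decide
      rw [hzero, mul_zero, mul_zero]
  -- Parseval consequence
  have hpars : (S.card : ℝ) * ((K.card : ℝ) / 2 ^ n) = 1 := by
    have h := parseval f hf1
    rw [show ∑ A : Finset (Fin n), fCoeff f A ^ 2
        = ∑ A : Finset (Fin n), (if A ∈ S then (K.card : ℝ) / 2 ^ n else 0) from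
      Finset.sum_congr rfl fun A _ => hsq A] at h
    rw [Finset.sum_ite_mem] at h
    rw [Finset.univ_inter] at h
    rw [Finset.sum_const] at h
    rw [nsmul_eq_mul] at h
    exact h
  refine ⟨Real.sqrt ((K.card : ℝ) / 2 ^ n), S, Real.sqrt_nonneg _, ?_, ?_, ?_, ?_⟩
  · -- S nonempty
    by_contra h
    rw [Finset.not_nonempty_iff_eq_empty] at h
    rw [h] at hpars
    simp at hpars
  · -- magnitudes
    intro A
    have habs : |fCoeff f A| = Real.sqrt (fCoeff f A ^ 2) := (Real.sqrt_sq_eq_abs _).symm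
    rw [habs, hsq A]
    by_cases hAS : A ∈ S
    · rw [if_pos hAS, if_pos hAS]
    · rw [if_neg hAS, if_neg hAS, Real.sqrt_zero]
  · -- closure
    intro A hA B hB D hD
    apply Finset.mem_filter.2
    refine ⟨Finset.mem_univ _, ?_⟩
    intro z hz
    have hA' := (Finset.mem_filter.1 hA).2 z hz
    have hB' := (Finset.mem_filter.1 hB).2 z hz
    have hD' := (Finset.mem_filter.1 hD).2 z hz
    rw [sum_symmDiff_zmod2, sum_symmDiff_zmod2]
    generalize hu : p z + p 0 = u at hA' hB' hD' ⊢
    clear hu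
    generalize (∑ i ∈ A, z i) = sa at hA' ⊢
    generalize (∑ i ∈ B, z i) = sb at hB' ⊢
    generalize (∑ i ∈ D, z i) = sd at hD' ⊢
    revert hA' hB' hD'
    revert u sa sb sd
    decide
  · -- normalization
    rw [Real.sq_sqrt (by positivity)]
    exact hpars


/-- For any degree `≤ 2` polynomial `p : 𝔽₂ⁿ → 𝔽₂`, the `k`-th Fourier weight of
`(-1)^{p(x)}` is at most `(1 + √2)^k`. -/
theorem fourier_weight_deg_two_le (n : ℕ) (hn : 1 ≤ n)
    (p : (Fin n → ZMod 2) → ZMod 2) (hp : IsDegreeLE2 p) (k : ℕ) :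
    ∑ A ∈ Finset.powersetCard k (Finset.univ : Finset (Fin n)),
        |fCoeff (fun x => (-1 : ℝ) ^ (p x).val) A|
      ≤ (1 + Real.sqrt 2) ^ k := by
  obtain ⟨m, S, hm0, hSne, hmag, hcl, hnorm⟩ := quadSpectrum p hp
  set t : ℝ := Real.sqrt 2 - 1 with ht
  have hsq2 : Real.sqrt 2 ^ 2 = 2 := Real.sq_sqrt (by norm_num)
  have hsqnn : 0 ≤ Real.sqrt 2 := Real.sqrt_nonneg 2
  have hs1 : 1 < Real.sqrt 2 := by nlinarith
  have ht0 : 0 < t := by rw [ht]; linarith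
  have ht1 : t ≤ 1 := by rw [ht]; nlinarith
  have h2 : (1 + t) ^ 2 ≤ 2 := by rw [ht]; nlinarith
  have hcount := counting t ht0.le ht1 h2 Finset.univ S hSne
    (fun A _ => Finset.subset_univ A) hcl
  have hmsqrt : m * Real.sqrt S.card ≤ 1 := by
    have : m * Real.sqrt S.card = Real.sqrt (m ^ 2 * S.card) := by
      rw [Real.sqrt_mul (by positivity), Real.sqrt_sq hm0]
    rw [this, show m ^ 2 * (S.card : ℝ) = 1 by linarith [hnorm, mul_comm (S.card : ℝ) (m ^ 2)]]
    rw [Real.sqrt_one]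
  set W : ℝ := ∑ A ∈ Finset.powersetCard k (Finset.univ : Finset (Fin n)),
    |fCoeff (fun x => (-1 : ℝ) ^ (p x).val) A| with hW
  have hWt : t ^ k * W ≤ 1 := by
    have e1 : W = ∑ A ∈ Finset.powersetCard k (Finset.univ : Finset (Fin n)) ∩ S, m := by
      rw [hW, show (∑ A ∈ Finset.powersetCard k (Finset.univ : Finset (Fin n)),
          |fCoeff (fun x => (-1 : ℝ) ^ (p x).val) A|)
        = ∑ A ∈ Finset.powersetCard k (Finset.univ : Finset (Fin n)),
            (if A ∈ S then m else 0) from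
        Finset.sum_congr rfl fun A _ => hmag A]
      rw [Finset.sum_ite_mem]
    have e2 : t ^ k * W
        = ∑ A ∈ Finset.powersetCard k (Finset.univ : Finset (Fin n)) ∩ S,
            m * t ^ A.card := by
      rw [e1, Finset.mul_sum]
      apply Finset.sum_congr rfl
      intro A hA
      have hcard : A.card = k :=
        (Finset.mem_powersetCard.1 (Finset.mem_inter.1 hA).1).2
      rw [hcard]; ring
    have e3 : ∑ A ∈ Finset.powersetCard k (Finset.univ : Finset (Fin n)) ∩ S,
          m * t ^ A.card ≤ ∑ A ∈ S, m * t ^ A.card := by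
      apply Finset.sum_le_sum_of_subset_of_nonneg Finset.inter_subset_right
      intro A _ _
      positivity
    have e4 : ∑ A ∈ S, m * t ^ A.card ≤ m * Real.sqrt S.card := by
      rw [← Finset.mul_sum]
      exact mul_le_mul_of_nonneg_left hcount hm0
    linarith
  have hprod : t * (1 + Real.sqrt 2) = 1 := by rw [ht]; nlinarith
  have hpowprod : t ^ k * (1 + Real.sqrt 2) ^ k = 1 := by
    rw [← mul_pow, hprod, one_pow]
  have hpow : 0 < t ^ k := pow_pos ht0 k
  rw [← mul_le_mul_iff_right₀ hpow]
  calc t ^ k * W ≤ 1 := hWt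
    _ = t ^ k * (1 + Real.sqrt 2) ^ k := hpowprod.symm
end

section
/- Let n ≥ 2m and let Q : 𝔽₂ⁿ → 𝔽₂ be Q(z) = ∑_{j=1}^m z_{2j−1} z_{2j}, and set f(z) = (−1)^{Q(z)}. Then for every k ≥ 0, the k-th Fourier weight of f equals 2^{−m} · C(2m, k): that is, ∑_{S ⊆ [n], |S| = k} |f̂(S)| = 2^{−m} · binom(2m, k). -/
open Finset

namespace FW

lemma zmod2_cases (a : ZMod 2) : a = 0 ∨ a = 1 := by revert a; decide

noncomputable def χ (a : ZMod 2) : ℝ := (-1 : ℝ) ^ a.val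

lemma χ_zero : χ 0 = 1 := by simp [χ]

lemma χ_one : χ 1 = -1 := by
  have h : (1 : ZMod 2).val = 1 := rfl
  simp [χ, h]

lemma χ_add (a b : ZMod 2) : χ (a + b) = χ a * χ b := by
  have h2 : (1 + 1 : ZMod 2) = 0 := by decide
  rcases zmod2_cases a with ha | ha <;> rcases zmod2_cases b with hb | hb <;>
    subst ha <;> subst hb <;>
    simp only [add_zero, zero_add, h2, χ_zero, χ_one] <;> norm_num

lemma χ_abs (a : ZMod 2) : |χ a| = 1 := by
  simp [χ, abs_pow]

lemma χ_mul_self (a : ZMod 2) : χ a * χ a = 1 := by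
  rcases zmod2_cases a with h | h <;> subst h <;> norm_num [χ_zero, χ_one]

lemma χ_add_one (a : ZMod 2) : χ (a + 1) = - χ a := by
  rw [χ_add, χ_one]; ring

lemma sum_eq_zero_of_comp_neg {α : Type*} [Fintype α] (σ : Equiv.Perm α) (g : α → ℝ)
    (h : ∀ x, g (σ x) = - g x) : ∑ x, g x = 0 := by
  have h1 : ∑ x, g (σ x) = ∑ x, g x := Equiv.sum_comp σ g
  simp only [h] at h1
  rw [Finset.sum_neg_distrib] at h1
  linarith

lemma sum_range_two_mul {M : Type*} [AddCommMonoid M] (a : ℕ) (F : ℕ → M) :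
    ∑ i ∈ Finset.range (2 * a), F i = ∑ j ∈ Finset.range a, (F (2 * j) + F (2 * j + 1)) := by
  induction a with
  | zero => simp
  | succ a ih =>
      have h2 : 2 * (a + 1) = (2 * a + 1) + 1 := by ring
      rw [h2, Finset.sum_range_succ, Finset.sum_range_succ, Finset.sum_range_succ, ih, add_assoc]


lemma i0_lt (n m : ℕ) (hmn : 2 * m ≤ n) (j : Fin m) : 2 * j.val < n := by
  have := j.isLt; omega
lemma i1_lt (n m : ℕ) (hmn : 2 * m ≤ n) (j : Fin m) : 2 * j.val + 1 < n := by
  have := j.isLt; omega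
def i0 (n m : ℕ) (hmn : 2 * m ≤ n) (j : Fin m) : Fin n :=
  ⟨2 * j.val, i0_lt n m hmn j⟩
def i1 (n m : ℕ) (hmn : 2 * m ≤ n) (j : Fin m) : Fin n :=
  ⟨2 * j.val + 1, i1_lt n m hmn j⟩

def Qf (n m : ℕ) (hmn : 2 * m ≤ n) (x : Fin n → ZMod 2) : ZMod 2 :=
  ∑ j : Fin m, x (i0 n m hmn j) * x (i1 n m hmn j)

def Lf (n m : ℕ) (hmn : 2 * m ≤ n) (t x : Fin n → ZMod 2) : ZMod 2 :=
  ∑ j : Fin m, (x (i0 n m hmn j) * t (i1 n m hmn j) + x (i1 n m hmn j) * t (i0 n m hmn j))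

lemma Qf_add (n m : ℕ) (hmn : 2 * m ≤ n) (x t : Fin n → ZMod 2) :
    Qf n m hmn (x + t) = Qf n m hmn x + Qf n m hmn t + Lf n m hmn t x := by
  unfold Qf Lf
  rw [← Finset.sum_add_distrib, ← Finset.sum_add_distrib]
  refine Finset.sum_congr rfl fun j _ => ?_
  simp only [Pi.add_apply]
  ring

lemma Lf_add_left (n m : ℕ) (hmn : 2 * m ≤ n) (t x y : Fin n → ZMod 2) :
    Lf n m hmn t (x + y) = Lf n m hmn t x + Lf n m hmn t y := by
  unfold Lf
  rw [← Finset.sum_add_distrib]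
  refine Finset.sum_congr rfl fun j _ => ?_
  simp only [Pi.add_apply]
  ring

def partner (n m : ℕ) (hmn : 2 * m ≤ n) (i : Fin n) (hi : i.val < 2 * m) : Fin n :=
  ⟨2 * (i.val / 2) + 1 - i.val % 2, by omega⟩

lemma Lf_single (n m : ℕ) (hmn : 2 * m ≤ n) (d : Fin n → ZMod 2) (i : Fin n)
    (hi : i.val < 2 * m) :
    Lf n m hmn d (Pi.single (partner n m hmn i hi) 1) = d i := by
  have hpar : i.val % 2 = 0 ∨ i.val % 2 = 1 := by omega
  set j0 : Fin m := ⟨i.val / 2, by omega⟩ with hj0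
  unfold Lf
  rw [Finset.sum_eq_single j0]
  · rcases hpar with hp | hp
    · have h1 : partner n m hmn i hi = i1 n m hmn j0 := by
        apply Fin.ext; simp only [partner, i1, hj0]; omega
      have h0 : i0 n m hmn j0 = i := by
        apply Fin.ext; simp only [i0, hj0]; omega
      have hne : i0 n m hmn j0 ≠ i1 n m hmn j0 := by
        intro h; have := congrArg Fin.val h; simp only [i0, i1, hj0] at this; omega
      rw [h1, Pi.single_eq_same, Pi.single_eq_of_ne hne, h0]; ring
    · have h1 : partner n m hmn i hi = i0 n m hmn j0 := by
        apply Fin.ext; simp only [partner, i0, hj0]; omega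
      have h0 : i1 n m hmn j0 = i := by
        apply Fin.ext; simp only [i1, hj0]; omega
      have hne : i1 n m hmn j0 ≠ i0 n m hmn j0 := by
        intro h; have := congrArg Fin.val h; simp only [i0, i1, hj0] at this; omega
      rw [h1, Pi.single_eq_same, Pi.single_eq_of_ne hne, h0]; ring
  · intro j _ hj
    have hne0 : i0 n m hmn j ≠ partner n m hmn i hi := by
      intro h; have := congrArg Fin.val h
      simp only [i0, partner] at this
      apply hj; apply Fin.ext; simp only [hj0]; omega
    have hne1 : i1 n m hmn j ≠ partner n m hmn i hi := by
      intro h; have := congrArg Fin.val h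
      simp only [i1, partner] at this
      apply hj; apply Fin.ext; simp only [hj0]; omega
    rw [Pi.single_eq_of_ne hne0, Pi.single_eq_of_ne hne1]
    ring
  · intro h; exact absurd (Finset.mem_univ j0) h


lemma sum_S_pairs (n m : ℕ) (hmn : 2 * m ≤ n) (S : Finset (Fin n))
    (hS : ∀ i ∈ S, i.val < 2 * m) (x : Fin n → ZMod 2) :
    ∑ i ∈ S, x i = ∑ j : Fin m,
      ((if i0 n m hmn j ∈ S then x (i0 n m hmn j) else 0)
        + (if i1 n m hmn j ∈ S then x (i1 n m hmn j) else 0)) := by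
  set F : ℕ → ZMod 2 := fun k =>
    if h : k < n then (if (⟨k, h⟩ : Fin n) ∈ S then x ⟨k, h⟩ else 0) else 0 with hF
  have step1 : ∑ i ∈ S, x i = ∑ k ∈ S.image Fin.val, F k := by
    rw [Finset.sum_image (by intro a _ b _ h; exact Fin.ext h)]
    refine Finset.sum_congr rfl fun i hi => ?_
    simp only [hF]
    rw [dif_pos i.isLt]
    simp [hi]
  have step2 : ∑ k ∈ S.image Fin.val, F k = ∑ k ∈ Finset.range (2 * m), F k := by
    refine Finset.sum_subset ?_ ?_
    · intro k hk
      simp only [Finset.mem_image] at hk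
      obtain ⟨i, hiS, rfl⟩ := hk
      exact Finset.mem_range.mpr (hS i hiS)
    · intro k hk hk2
      have hkn : k < n := lt_of_lt_of_le (Finset.mem_range.mp hk) hmn
      simp only [hF]
      rw [dif_pos hkn, if_neg]
      intro hmem
      exact hk2 (Finset.mem_image.mpr ⟨_, hmem, rfl⟩)
  have step3 : ∑ k ∈ Finset.range (2 * m), F k
      = ∑ j ∈ Finset.range m, (F (2 * j) + F (2 * j + 1)) := sum_range_two_mul m F
  have step4 : ∑ j ∈ Finset.range m, (F (2 * j) + F (2 * j + 1))
      = ∑ j : Fin m, (F (2 * j.val) + F (2 * j.val + 1)) :=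
    (Fin.sum_univ_eq_sum_range (fun j => F (2 * j) + F (2 * j + 1)) m).symm
  rw [step1, step2, step3, step4]
  refine Finset.sum_congr rfl fun j _ => ?_
  have hb0 : 2 * j.val < n := by have := j.isLt; omega
  have hb1 : 2 * j.val + 1 < n := by have := j.isLt; omega
  simp only [hF]
  rw [dif_pos hb0, dif_pos hb1]
  rfl

lemma caseA (n m : ℕ) (hmn : 2 * m ≤ n) (S : Finset (Fin n)) (i : Fin n)
    (hiS : i ∈ S) (hi : 2 * m ≤ i.val) :
    ∑ x : Fin n → ZMod 2, χ (Qf n m hmn x + ∑ i' ∈ S, x i') = 0 := by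
  set e : Fin n → ZMod 2 := Pi.single i 1 with he
  apply sum_eq_zero_of_comp_neg (Equiv.addRight e)
  intro x
  simp only [Equiv.coe_addRight]
  have hQe : Qf n m hmn e = 0 := by
    apply Finset.sum_eq_zero; intro j _
    rw [he, Pi.single_eq_of_ne (fun h => by
      have := congrArg Fin.val h; simp only [i0] at this; have := j.isLt; omega), zero_mul]
  have hLe : Lf n m hmn e x = 0 := by
    apply Finset.sum_eq_zero; intro j _
    rw [he, Pi.single_eq_of_ne (fun h => by
      have := congrArg Fin.val h; simp only [i1] at this; have := j.isLt; omega),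
      Pi.single_eq_of_ne (fun h => by
      have := congrArg Fin.val h; simp only [i0] at this; have := j.isLt; omega)]
    ring
  have hSe : (∑ i' ∈ S, e i') = 1 := by
    rw [Finset.sum_eq_single i]
    · exact Pi.single_eq_same i 1
    · intro b _ hb; exact Pi.single_eq_of_ne hb 1
    · intro h; exact absurd hiS h
  have hsum : (∑ i' ∈ S, (x + e) i') = (∑ i' ∈ S, x i') + 1 := by
    simp only [Pi.add_apply]
    rw [Finset.sum_add_distrib, hSe]
  rw [Qf_add, hQe, hLe, add_zero, add_zero, hsum, ← add_assoc, χ_add_one]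

lemma inner_zero (n m : ℕ) (hmn : 2 * m ≤ n) (d : Fin n → ZMod 2) (i : Fin n)
    (hi : i.val < 2 * m) (hd : d i ≠ 0) :
    ∑ x : Fin n → ZMod 2, χ (Lf n m hmn d x) = 0 := by
  have hd1 : d i = 1 := by rcases zmod2_cases (d i) with h | h; exact absurd h hd; exact h
  apply sum_eq_zero_of_comp_neg (Equiv.addRight (Pi.single (partner n m hmn i hi) 1))
  intro x
  simp only [Equiv.coe_addRight]
  rw [Lf_add_left, Lf_single n m hmn d i hi, hd1, χ_add_one]

lemma Qf_vanish (n m : ℕ) (hmn : 2 * m ≤ n) (d : Fin n → ZMod 2)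
    (h : ∀ i : Fin n, i.val < 2 * m → d i = 0) : Qf n m hmn d = 0 := by
  apply Finset.sum_eq_zero; intro j _
  rw [h (i0 n m hmn j) (by simp only [i0]; have := j.isLt; omega), zero_mul]

lemma Lf_vanish (n m : ℕ) (hmn : 2 * m ≤ n) (d x : Fin n → ZMod 2)
    (h : ∀ i : Fin n, i.val < 2 * m → d i = 0) : Lf n m hmn d x = 0 := by
  apply Finset.sum_eq_zero; intro j _
  rw [h (i0 n m hmn j) (by simp only [i0]; have := j.isLt; omega),
    h (i1 n m hmn j) (by simp only [i1]; have := j.isLt; omega)]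
  ring

lemma card_fun_card (n : ℕ) : (Fintype.card (Fin n → ZMod 2)) = 2 ^ n := by
  rw [Fintype.card_fun]
  simp

lemma card_vanish (n m : ℕ) (hmn : 2 * m ≤ n) :
    ((Finset.univ : Finset (Fin n → ZMod 2)).filter
      (fun d => ∀ i : Fin n, i.val < 2 * m → d i = 0)).card = 2 ^ (n - 2 * m) := by
  set g : (Fin (n - 2 * m) → ZMod 2) → (Fin n → ZMod 2) := fun w i =>
    if h : i.val < 2 * m then 0 else w ⟨i.val - 2 * m, by have := i.isLt; omega⟩ with hg
  have hginj : Function.Injective g := by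
    intro w1 w2 hw
    funext kk
    have hlt : kk.val + 2 * m < n := by have := kk.isLt; omega
    have h1 := congrFun hw (⟨kk.val + 2 * m, hlt⟩ : Fin n)
    have hnot : ¬ ((⟨kk.val + 2 * m, hlt⟩ : Fin n).val < 2 * m) := by simp
    simp only [hg, dif_neg hnot] at h1
    have hkk : (⟨(⟨kk.val + 2 * m, hlt⟩ : Fin n).val - 2 * m, by have := kk.isLt; omega⟩ :
        Fin (n - 2 * m)) = kk := Fin.ext (by simp)
    rwa [hkk] at h1
  have hset : ((Finset.univ : Finset (Fin n → ZMod 2)).filter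
      (fun d => ∀ i : Fin n, i.val < 2 * m → d i = 0)) = Finset.image g Finset.univ := by
    ext d
    simp only [Finset.mem_filter, Finset.mem_univ, true_and, Finset.mem_image]
    constructor
    · intro hd
      refine ⟨fun kk => d ⟨kk.val + 2 * m, by have := kk.isLt; omega⟩, ?_⟩
      funext i
      by_cases hi : i.val < 2 * m
      · simp only [hg, dif_pos hi]
        exact (hd i hi).symm
      · simp only [hg, dif_neg hi]
        congr 1
        exact Fin.ext (by simp; omega)
    · rintro ⟨w, rfl⟩ i hi
      simp only [hg, dif_pos hi]
  rw [hset, Finset.card_image_of_injective _ hginj, Finset.card_univ, card_fun_card]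

lemma c_sq (n m : ℕ) (hmn : 2 * m ≤ n) :
    (∑ x : Fin n → ZMod 2, χ (Qf n m hmn x)) * (∑ x : Fin n → ZMod 2, χ (Qf n m hmn x))
      = 2 ^ n * 2 ^ (n - 2 * m) := by
  rw [Finset.sum_mul_sum]
  have step1 : ∀ x : Fin n → ZMod 2,
      ∑ y : Fin n → ZMod 2, χ (Qf n m hmn x) * χ (Qf n m hmn y)
        = ∑ d : Fin n → ZMod 2, χ (Qf n m hmn d) * χ (Lf n m hmn d x) := by
    intro x
    rw [← Equiv.sum_comp (Equiv.addLeft x)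
      (fun y => χ (Qf n m hmn x) * χ (Qf n m hmn y))]
    refine Finset.sum_congr rfl fun d _ => ?_
    simp only [Equiv.coe_addLeft]
    rw [show x + d = (x + d : Fin n → ZMod 2) from rfl]
    rw [Qf_add n m hmn x d, χ_add, χ_add]
    rw [show χ (Qf n m hmn x) * (χ (Qf n m hmn x) * χ (Qf n m hmn d) * χ (Lf n m hmn d x))
        = (χ (Qf n m hmn x) * χ (Qf n m hmn x)) * (χ (Qf n m hmn d) * χ (Lf n m hmn d x))
      from by ring, χ_mul_self, one_mul]
  calc ∑ x : Fin n → ZMod 2, ∑ y : Fin n → ZMod 2, χ (Qf n m hmn x) * χ (Qf n m hmn y)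
      = ∑ x : Fin n → ZMod 2, ∑ d : Fin n → ZMod 2,
          χ (Qf n m hmn d) * χ (Lf n m hmn d x) := Finset.sum_congr rfl fun x _ => step1 x
    _ = ∑ d : Fin n → ZMod 2, ∑ x : Fin n → ZMod 2,
          χ (Qf n m hmn d) * χ (Lf n m hmn d x) := Finset.sum_comm
    _ = ∑ d : Fin n → ZMod 2,
          (if (∀ i : Fin n, i.val < 2 * m → d i = 0) then (2:ℝ) ^ n else 0) := by
        refine Finset.sum_congr rfl fun d _ => ?_
        by_cases hd : ∀ i : Fin n, i.val < 2 * m → d i = 0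
        · rw [if_pos hd]
          have h1 : ∀ x : Fin n → ZMod 2, χ (Qf n m hmn d) * χ (Lf n m hmn d x) = 1 := by
            intro x
            rw [Qf_vanish n m hmn d hd, Lf_vanish n m hmn d x hd, χ_zero, one_mul]
          rw [Finset.sum_congr rfl fun x _ => h1 x, Finset.sum_const, Finset.card_univ,
            card_fun_card]
          simp
        · rw [if_neg hd]
          push_neg at hd
          obtain ⟨i, hi, hdi⟩ := hd
          rw [← Finset.mul_sum, inner_zero n m hmn d i hi hdi, mul_zero]
    _ = 2 ^ n * 2 ^ (n - 2 * m) := by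
        rw [Finset.sum_ite, Finset.sum_const, Finset.sum_const, card_vanish n m hmn]
        simp [mul_comm]

lemma c_abs (n m : ℕ) (hmn : 2 * m ≤ n) :
    |∑ x : Fin n → ZMod 2, χ (Qf n m hmn x)| = 2 ^ (n - m) := by
  set c := ∑ x : Fin n → ZMod 2, χ (Qf n m hmn x) with hc
  have h1 : c * c = ((2:ℝ) ^ (n - m)) ^ 2 := by
    rw [c_sq n m hmn, ← pow_mul, ← pow_add]
    congr 1
    omega
  have h2 : |c| = Real.sqrt (c ^ 2) := (Real.sqrt_sq_eq_abs c).symm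
  rw [h2, sq, h1, Real.sqrt_sq (by positivity)]

lemma caseB (n m : ℕ) (hmn : 2 * m ≤ n) (S : Finset (Fin n))
    (hS : ∀ i ∈ S, i.val < 2 * m) :
    |∑ x : Fin n → ZMod 2, χ (Qf n m hmn x + ∑ i ∈ S, x i)| = 2 ^ (n - m) := by
  set t : Fin n → ZMod 2 := fun i =>
    if h : i.val < 2 * m then (if partner n m hmn i h ∈ S then 1 else 0) else 0 with ht
  have ht0 : ∀ j : Fin m, t (i0 n m hmn j) = (if i1 n m hmn j ∈ S then 1 else 0) := by
    intro j
    have hlt : (i0 n m hmn j).val < 2 * m := by simp only [i0]; have := j.isLt; omega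
    have hp : partner n m hmn (i0 n m hmn j) hlt = i1 n m hmn j :=
      Fin.ext (by simp only [partner, i0, i1]; omega)
    simp only [ht]
    rw [dif_pos hlt, hp]
  have ht1 : ∀ j : Fin m, t (i1 n m hmn j) = (if i0 n m hmn j ∈ S then 1 else 0) := by
    intro j
    have hlt : (i1 n m hmn j).val < 2 * m := by simp only [i1]; have := j.isLt; omega
    have hp : partner n m hmn (i1 n m hmn j) hlt = i0 n m hmn j :=
      Fin.ext (by simp only [partner, i0, i1]; omega)
    simp only [ht]
    rw [dif_pos hlt, hp]
  have hL : ∀ x : Fin n → ZMod 2, Lf n m hmn t x = ∑ i ∈ S, x i := by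
    intro x
    rw [sum_S_pairs n m hmn S hS x]
    refine Finset.sum_congr rfl fun j _ => ?_
    rw [ht0 j, ht1 j]
    by_cases h0 : i0 n m hmn j ∈ S <;> by_cases h1 : i1 n m hmn j ∈ S <;>
      simp [h0, h1]
  have key : ∀ x : Fin n → ZMod 2,
      χ (Qf n m hmn (x + t)) = χ (Qf n m hmn t) * χ (Qf n m hmn x + ∑ i ∈ S, x i) := by
    intro x
    rw [Qf_add n m hmn x t, hL x]
    rw [show Qf n m hmn x + Qf n m hmn t + (∑ i ∈ S, x i)
        = Qf n m hmn t + (Qf n m hmn x + ∑ i ∈ S, x i) from by ring, χ_add]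
  have hbij : ∑ x : Fin n → ZMod 2, χ (Qf n m hmn (x + t))
      = ∑ x : Fin n → ZMod 2, χ (Qf n m hmn x) :=
    Equiv.sum_comp (Equiv.addRight t) (fun x => χ (Qf n m hmn x))
  have heq : χ (Qf n m hmn t) * (∑ x : Fin n → ZMod 2, χ (Qf n m hmn x + ∑ i ∈ S, x i))
      = ∑ x : Fin n → ZMod 2, χ (Qf n m hmn x) := by
    rw [Finset.mul_sum, ← hbij]
    exact Finset.sum_congr rfl fun x _ => (key x).symm
  have := congrArg abs heq
  rw [abs_mul, χ_abs, one_mul] at this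
  rw [this, c_abs n m hmn]

end FW

/-- For `Q(z) = ∑_{j=1}^m z_{2j-1} z_{2j}` on `𝔽₂ⁿ` with `n ≥ 2m` and `f = (-1)^Q`, the
`k`-th Fourier weight of `f` equals `2^{-m} · binom(2m, k)`. -/
theorem fourier_weight_canonical_quadratic (n m : ℕ) (hmn : 2 * m ≤ n)
    (Q : (Fin n → ZMod 2) → ZMod 2)
    (hQ : ∀ z, Q z =
      ∑ j : Fin m,
        z ⟨2 * (j : ℕ), by have := j.isLt; omega⟩ *
        z ⟨2 * (j : ℕ) + 1, by have := j.isLt; omega⟩)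
    (k : ℕ) :
    ∑ S ∈ Finset.powersetCard k (Finset.univ : Finset (Fin n)),
        |fCoeff (fun z => (-1 : ℝ) ^ (Q z).val) S|
      = (1 / 2 ^ m) * (Nat.choose (2 * m) k : ℝ) := by
  classical
  have hQf : ∀ z, Q z = FW.Qf n m hmn z := by
    intro z; rw [hQ]; rfl
  have hfc : ∀ S : Finset (Fin n), fCoeff (fun z => (-1:ℝ)^(Q z).val) S
      = (1/2^n) * ∑ x : Fin n → ZMod 2, FW.χ (FW.Qf n m hmn x + ∑ i ∈ S, x i) := by
    intro S
    unfold fCoeff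
    congr 1
    refine Finset.sum_congr rfl fun x _ => ?_
    rw [FW.χ_add]
    show (-1:ℝ)^(Q x).val * (-1:ℝ)^(∑ i ∈ S, x i).val = _
    rw [hQf x]
    rfl
  set P : Finset (Fin n) := Finset.univ.filter (fun i : Fin n => i.val < 2*m) with hP
  have hPcard : P.card = 2*m := by
    have himg : P = Finset.image (Fin.castLE hmn) Finset.univ := by
      ext i
      simp only [hP, Finset.mem_filter, Finset.mem_univ, true_and, Finset.mem_image]
      constructor
      · intro hi; exact ⟨⟨i.val, hi⟩, Fin.ext rfl⟩
      · rintro ⟨j, rfl⟩; simp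
    rw [himg, Finset.card_image_of_injective _ (Fin.castLE_injective hmn),
      Finset.card_univ, Fintype.card_fin]
  have hsub : Finset.powersetCard k P ⊆ Finset.powersetCard k Finset.univ :=
    Finset.powersetCard_mono (Finset.subset_univ P)
  have hzeros : ∀ S ∈ Finset.powersetCard k (Finset.univ : Finset (Fin n)),
      S ∉ Finset.powersetCard k P → |fCoeff (fun z => (-1:ℝ)^(Q z).val) S| = 0 := by
    intro S hSu hSP
    have hcard := (Finset.mem_powersetCard.mp hSu).2
    have hns : ¬ S ⊆ P := fun h => hSP (Finset.mem_powersetCard.mpr ⟨h, hcard⟩)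
    obtain ⟨i, hiS, hiP⟩ := Finset.not_subset.mp hns
    have hi2 : 2*m ≤ i.val := by
      simp only [hP, Finset.mem_filter, Finset.mem_univ, true_and] at hiP
      omega
    rw [hfc S, FW.caseA n m hmn S i hiS hi2, mul_zero, abs_zero]
  rw [← Finset.sum_subset hsub hzeros]
  have hval : ∀ S ∈ Finset.powersetCard k P,
      |fCoeff (fun z => (-1:ℝ)^(Q z).val) S| = 1/2^m := by
    intro S hSm
    have hSP := (Finset.mem_powersetCard.mp hSm).1
    have hS : ∀ i ∈ S, i.val < 2*m := by
      intro i hi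
      have := hSP hi
      simp only [hP, Finset.mem_filter, Finset.mem_univ, true_and] at this
      exact this
    rw [hfc S, abs_mul, abs_of_nonneg (by positivity : (0:ℝ) ≤ 1/2^n),
      FW.caseB n m hmn S hS]
    rw [div_mul_eq_mul_div, one_mul, div_eq_div_iff (by positivity) (by positivity),
      one_mul, ← pow_add]
    congr 1
    omega
  rw [Finset.sum_congr rfl hval, Finset.sum_const, Finset.card_powersetCard, hPcard,
    nsmul_eq_mul]
  ring
end

section
/- For all real α ∈ [0, 1], the inequality α^α · (2 − α)^{2 − α} ≥ 2 · (√2 − 1)^α holds (with the convention 0^0 = 1). -/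
/-- Tangent-line bound: for `x ≥ 0`, `a > 0`, `x^x ≥ a^x * exp (x - a)`
(with `0^0 = 1`). -/
theorem rpow_self_ge_aux (x a : ℝ) (hx : 0 ≤ x) (ha : 0 < a) :
    a ^ x * Real.exp (x - a) ≤ x ^ x := by
  rcases eq_or_lt_of_le hx with h0 | hx
  · rw [← h0]
    simp only [Real.rpow_zero, one_mul, zero_sub]
    calc Real.exp (-a) ≤ Real.exp 0 := Real.exp_le_exp.mpr (by linarith)
      _ = 1 := Real.exp_zero
  · rw [Real.rpow_def_of_pos ha, Real.rpow_def_of_pos hx, ← Real.exp_add,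
      Real.exp_le_exp]
    have h := Real.log_le_sub_one_of_pos (div_pos ha hx)
    rw [Real.log_div ha.ne' hx.ne'] at h
    have h2 := mul_le_mul_of_nonneg_left h hx.le
    have hax : x * (a / x - 1) = a - x := by field_simp
    nlinarith [h2]

/-- For all `α ∈ [0, 1]`, `α^α · (2 - α)^{2-α} ≥ 2 · (√2 - 1)^α`
(real powers, with the convention `0^0 = 1`). -/
theorem rpow_inequality (α : ℝ) (hα : α ∈ Set.Icc (0 : ℝ) 1) :
    α ^ α * (2 - α) ^ (2 - α) ≥ 2 * (Real.sqrt 2 - 1) ^ α := by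
  obtain ⟨h0, h1⟩ := hα
  set s : ℝ := Real.sqrt 2 with hs
  have hs2 : s ^ 2 = 2 := Real.sq_sqrt (by norm_num)
  have hs0 : 0 ≤ s := Real.sqrt_nonneg 2
  have hs1 : 1 < s := by nlinarith
  have hsp : 0 < s := by linarith
  have hc : (0:ℝ) < 2 - s := by nlinarith
  have hα2 : (0:ℝ) ≤ 2 - α := by linarith
  have key1 := rpow_self_ge_aux α (2 - s) h0 hc
  have key2 := rpow_self_ge_aux (2 - α) s hα2 hsp
  have hprod : ((2 - s) ^ α * Real.exp (α - (2 - s))) *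
      (s ^ (2 - α) * Real.exp ((2 - α) - s)) ≤ α ^ α * (2 - α) ^ (2 - α) := by
    apply mul_le_mul key1 key2 (by positivity) (Real.rpow_nonneg h0 α)
  have hexp : Real.exp (α - (2 - s)) * Real.exp ((2 - α) - s) = 1 := by
    rw [← Real.exp_add]
    have : (α - (2 - s)) + ((2 - α) - s) = 0 := by ring
    rw [this, Real.exp_zero]
  have hceq : (2 - s) = s * (s - 1) := by nlinarith
  have hmul : (2 - s) ^ α = s ^ α * (s - 1) ^ α := by
    rw [hceq, Real.mul_rpow hs0 (by linarith)]
  have hss : s ^ α * s ^ (2 - α) = 2 := by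
    rw [← Real.rpow_add hsp]
    have : α + (2 - α) = (2:ℝ) := by ring
    rw [this, show ((2:ℝ) : ℝ) = ((2:ℕ) : ℝ) by norm_num, Real.rpow_natCast]
    exact_mod_cast hs2
  have : ((2 - s) ^ α * Real.exp (α - (2 - s))) *
      (s ^ (2 - α) * Real.exp ((2 - α) - s))
      = 2 * (s - 1) ^ α := by
    calc ((2 - s) ^ α * Real.exp (α - (2 - s))) *
        (s ^ (2 - α) * Real.exp ((2 - α) - s))
        = ((2 - s) ^ α * s ^ (2 - α)) *
          (Real.exp (α - (2 - s)) * Real.exp ((2 - α) - s)) := by ring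
      _ = (2 - s) ^ α * s ^ (2 - α) := by rw [hexp, mul_one]
      _ = (s ^ α * s ^ (2 - α)) * (s - 1) ^ α := by rw [hmul]; ring
      _ = 2 * (s - 1) ^ α := by rw [hss]
  linarith [this ▸ hprod]
end

section
/- There exists a constant C > 0 such that for all integers m ≥ 1 and all integers k with 1 ≤ k ≤ m, binom(2m + 1, k) ≤ C · 2^m · k^{−1/2} · (1 + √2)^k. -/
open Real Nat

open Real Nat

lemma my_stirling_le (n : ℕ) (hn : 1 ≤ n) :
    (n ! : ℝ) ≤ Real.exp 1 / Real.sqrt 2 * (Real.sqrt (2 * (n:ℝ)) * ((n:ℝ) / Real.exp 1) ^ n) := by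
  obtain ⟨j, rfl⟩ : ∃ j, n = j + 1 := ⟨n - 1, by omega⟩
  have h : Stirling.stirlingSeq (j + 1) ≤ Stirling.stirlingSeq 1 :=
    Stirling.stirlingSeq'_antitone (Nat.zero_le j)
  rw [Stirling.stirlingSeq_one] at h
  have hd : 0 < Real.sqrt (2 * ((j+1 : ℕ):ℝ)) * (((j+1:ℕ):ℝ) / Real.exp 1) ^ (j+1) := by
    have : (0:ℝ) < ((j+1:ℕ):ℝ) := by positivity
    positivity
  unfold Stirling.stirlingSeq at h
  rw [div_le_iff₀ hd] at h
  linarith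

lemma my_stirling_ge (n : ℕ) (hn : 1 ≤ n) :
    Real.sqrt (2 * (n:ℝ)) * ((n:ℝ) / Real.exp 1) ^ n ≤ (n ! : ℝ) := by
  obtain ⟨j, rfl⟩ : ∃ j, n = j + 1 := ⟨n - 1, by omega⟩
  have ht : Filter.Tendsto (Stirling.stirlingSeq ∘ Nat.succ) Filter.atTop
      (nhds (Real.sqrt Real.pi)) :=
    Stirling.tendsto_stirlingSeq_sqrt_pi.comp (Filter.tendsto_add_atTop_nat 1)
  have h : Real.sqrt Real.pi ≤ Stirling.stirlingSeq (j + 1) :=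
    Stirling.stirlingSeq'_antitone.le_of_tendsto ht j
  have h1 : (1:ℝ) ≤ Stirling.stirlingSeq (j + 1) := by
    refine le_trans ?_ h
    rw [show (1:ℝ) = Real.sqrt 1 by simp]
    exact Real.sqrt_le_sqrt (by linarith [Real.pi_gt_three])
  have hd : 0 < Real.sqrt (2 * ((j+1 : ℕ):ℝ)) * (((j+1:ℕ):ℝ) / Real.exp 1) ^ (j+1) := by
    have : (0:ℝ) < ((j+1:ℕ):ℝ) := by positivity
    positivity
  unfold Stirling.stirlingSeq at h1
  rw [le_div_iff₀ hd] at h1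
  linarith

lemma my_entropy (t : ℝ) (ht : 0 < t) (k l : ℕ) (hk : 0 < k) (hl : 0 < l) :
    ((k:ℝ) + l) ^ (k + l) * t ^ k ≤ (1 + t) ^ (k + l) * ((k:ℝ) ^ k * (l:ℝ) ^ l) := by
  have hK : (0:ℝ) < k := by exact_mod_cast hk
  have hL : (0:ℝ) < l := by exact_mod_cast hl
  set N : ℝ := (k:ℝ) + l with hNdef
  have hN : 0 < N := by positivity
  have hw : (k:ℝ)/N + (l:ℝ)/N = 1 := by field_simp; exact hNdef.symm
  have hgm := Real.geom_mean_le_arith_mean2_weighted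
    (div_nonneg hK.le hN.le) (div_nonneg hL.le hN.le)
    (by positivity : (0:ℝ) ≤ t * N / k) (by positivity : (0:ℝ) ≤ N / l) hw
  have hrhs : (k:ℝ)/N * (t * N / k) + (l:ℝ)/N * (N / l) = 1 + t := by
    field_simp
    ring
  rw [hrhs] at hgm
  have h2 : ((t * N / k) ^ ((k:ℝ)/N) * (N / l) ^ ((l:ℝ)/N)) ^ N ≤ (1 + t) ^ N :=
    Real.rpow_le_rpow (by positivity) hgm hN.le
  rw [Real.mul_rpow (by positivity) (by positivity),
    ← Real.rpow_mul (by positivity), ← Real.rpow_mul (by positivity),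
    div_mul_cancel₀ _ hN.ne', div_mul_cancel₀ _ hN.ne',
    Real.rpow_natCast, Real.rpow_natCast] at h2
  have hNcast : N = ((k + l : ℕ) : ℝ) := by push_cast; ring
  rw [hNcast, Real.rpow_natCast, ← hNcast] at h2
  have h3 := mul_le_mul_of_nonneg_right h2 (by positivity : (0:ℝ) ≤ (k:ℝ)^k * (l:ℝ)^l)
  calc N ^ (k + l) * t ^ k
      = (t * N / k) ^ k * (N / l) ^ l * ((k:ℝ)^k * (l:ℝ)^l) := by
        rw [div_pow, div_pow, mul_pow]
        field_simp
        ring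
    _ ≤ (1 + t) ^ (k + l) * ((k:ℝ)^k * (l:ℝ)^l) := h3


lemma my_algR (e s2 sk sl K L : ℝ) (k l m n : ℕ) (he : 0 < e) (hsk : 0 < sk)
    (h22 : s2 * s2 = 2) (hen : e ^ k * e ^ l = e ^ n) :
    2 * e * 2 ^ m * sk⁻¹ * (1 + s2) ^ k *
        ((s2 * sk * (K ^ k / e ^ k)) * (s2 * sl * (L ^ l / e ^ l)))
      = e * (4 * 2 ^ m * (1 + s2) ^ k * sl * (K ^ k * L ^ l)) / e ^ n := by
  rw [← hen]
  field_simp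
  linear_combination (2 * (1 + s2) ^ k * sl * K ^ k * L ^ l) * h22

lemma my_algL (e s2 sn N : ℝ) (n : ℕ) (he : 0 < e) (hs2 : 0 < s2) :
    e / s2 * (s2 * sn * (N ^ n / e ^ n)) = e * (sn * N ^ n) / e ^ n := by
  field_simp

set_option maxHeartbeats 2000000 in
/-- There is a constant `C > 0` such that `binom(2m+1, k) ≤ C · 2^m · k^{-1/2} · (1+√2)^k`
for all `m ≥ 1` and `1 ≤ k ≤ m`. -/
theorem binom_bound :
    ∃ C : ℝ, 0 < C ∧ ∀ m k : ℕ, 1 ≤ m → 1 ≤ k → k ≤ m →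
      (Nat.choose (2 * m + 1) k : ℝ) ≤
        C * 2 ^ m * (k : ℝ) ^ (-(1 : ℝ) / 2) * (1 + Real.sqrt 2) ^ k := by
  refine ⟨2 * Real.exp 1, by positivity, ?_⟩
  intro m k hm hk hkm
  set s2 := Real.sqrt 2 with hs2def
  have hs2sq : s2 ^ 2 = 2 := Real.sq_sqrt (by norm_num)
  have hs2pos : 0 < s2 := Real.sqrt_pos.mpr (by norm_num)
  have hs2gt1 : 1 < s2 := by nlinarith
  set e := Real.exp 1 with hedef
  have he : 0 < e := Real.exp_pos 1
  set n := 2 * m + 1 with hndef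
  set l := n - k with hldef
  have hkl : k + l = n := by omega
  have hl1 : 1 ≤ l := by omega
  have hln : n ≤ 2 * l := by omega
  have hkn : k ≤ n := by omega
  have hKpos : (0:ℝ) < k := by exact_mod_cast hk
  have hLpos : (0:ℝ) < l := by exact_mod_cast hl1
  have hNpos : (0:ℝ) < n := by positivity
  have hsk : (0:ℝ) < Real.sqrt k := Real.sqrt_pos.mpr hKpos
  have hsl : (0:ℝ) < Real.sqrt l := Real.sqrt_pos.mpr hLpos
  -- rewrite rpow
  have hrpow : (k:ℝ) ^ (-(1:ℝ)/2) = (Real.sqrt k)⁻¹ := by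
    rw [Real.sqrt_eq_rpow, ← Real.rpow_neg (Nat.cast_nonneg k)]
    norm_num
  rw [hrpow]
  -- Stirling bounds
  set A := Real.sqrt (2 * (k:ℝ)) * ((k:ℝ) / e) ^ k with hAdef
  set B := Real.sqrt (2 * (l:ℝ)) * ((l:ℝ) / e) ^ l with hBdef
  have hApos : 0 < A := by positivity
  have hBpos : 0 < B := by positivity
  have hA : A ≤ (k ! : ℝ) := my_stirling_ge k hk
  have hB : B ≤ (l ! : ℝ) := my_stirling_ge l hl1
  have hD : (n ! : ℝ) ≤ e / s2 * (Real.sqrt (2 * (n:ℝ)) * ((n:ℝ) / e) ^ n) :=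
    my_stirling_le n (by omega)
  have hfac : (n.choose k : ℝ) * ((k ! : ℝ) * (l ! : ℝ)) = (n ! : ℝ) := by
    have h := Nat.choose_mul_factorial_mul_factorial hkn
    push_cast [← h]
    ring
  have step1 : (n.choose k : ℝ) * (A * B) ≤ e / s2 * (Real.sqrt (2 * (n:ℝ)) * ((n:ℝ) / e) ^ n) := by
    calc (n.choose k : ℝ) * (A * B)
        ≤ (n.choose k : ℝ) * ((k ! : ℝ) * (l ! : ℝ)) := by
          apply mul_le_mul_of_nonneg_left _ (Nat.cast_nonneg _)
          exact mul_le_mul hA hB hBpos.le (Nat.cast_nonneg _)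
      _ = (n ! : ℝ) := hfac
      _ ≤ _ := hD
  -- entropy consequence
  set t := s2 - 1 with htdef
  have ht : 0 < t := by simp [htdef]; linarith
  have ht1 : t * (1 + s2) = 1 := by
    have : s2 ^ 2 = 2 := hs2sq
    nlinarith
  have hto : t ^ k * (1 + s2) ^ k = 1 := by rw [← mul_pow, ht1, one_pow]
  have hent : ((k:ℝ) + l) ^ (k + l) * t ^ k ≤ (1 + t) ^ (k + l) * ((k:ℝ) ^ k * (l:ℝ) ^ l) :=
    my_entropy t ht k l hk hl1
  have h1t : 1 + t = s2 := by simp [htdef]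
  have hs2n : s2 ^ n = 2 ^ m * s2 := by
    rw [hndef, pow_succ, pow_mul, hs2sq]
  have hNn : ((k:ℝ) + l) = (n:ℝ) := by push_cast [← hkl]; ring
  have hent2 : (n:ℝ) ^ n ≤ 2 ^ m * s2 * (1 + s2) ^ k * ((k:ℝ) ^ k * (l:ℝ) ^ l) := by
    have h := mul_le_mul_of_nonneg_right hent (by positivity : (0:ℝ) ≤ (1 + s2) ^ k)
    rw [hNn, h1t, hkl, hs2n] at h
    calc (n:ℝ) ^ n = (n:ℝ) ^ n * (t ^ k * (1 + s2) ^ k) := by rw [hto, mul_one]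
      _ = (n:ℝ) ^ n * t ^ k * (1 + s2) ^ k := by ring
      _ ≤ 2 ^ m * s2 * ((k:ℝ) ^ k * (l:ℝ) ^ l) * (1 + s2) ^ k := h
      _ = 2 ^ m * s2 * (1 + s2) ^ k * ((k:ℝ) ^ k * (l:ℝ) ^ l) := by ring
  -- key inequality
  have hsqrtn : Real.sqrt n ≤ 2 * Real.sqrt l := by
    rw [show (2:ℝ) * Real.sqrt l = Real.sqrt 4 * Real.sqrt l by
      rw [show (4:ℝ) = 2^2 by norm_num, Real.sqrt_sq (by norm_num)],
      ← Real.sqrt_mul (by norm_num)]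
    apply Real.sqrt_le_sqrt
    have : (n:ℝ) ≤ 4 * l := by exact_mod_cast (by omega : n ≤ 4 * l)
    linarith
  have key : Real.sqrt n * (n:ℝ) ^ n
      ≤ 4 * 2 ^ m * (1 + s2) ^ k * Real.sqrt l * ((k:ℝ) ^ k * (l:ℝ) ^ l) := by
    calc Real.sqrt n * (n:ℝ) ^ n
        ≤ (2 * Real.sqrt l) * (2 ^ m * s2 * (1 + s2) ^ k * ((k:ℝ) ^ k * (l:ℝ) ^ l)) := by
          apply mul_le_mul hsqrtn hent2 (by positivity) (by positivity)
      _ = (2 * s2) * (2 ^ m * (1 + s2) ^ k * Real.sqrt l * ((k:ℝ) ^ k * (l:ℝ) ^ l)) := by ring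
      _ ≤ 4 * (2 ^ m * (1 + s2) ^ k * Real.sqrt l * ((k:ℝ) ^ k * (l:ℝ) ^ l)) := by
          apply mul_le_mul_of_nonneg_right _ (by positivity)
          nlinarith
      _ = 4 * 2 ^ m * (1 + s2) ^ k * Real.sqrt l * ((k:ℝ) ^ k * (l:ℝ) ^ l) := by ring
  -- main analytic bound
  have hs2k : Real.sqrt (2 * (k:ℝ)) = s2 * Real.sqrt k := Real.sqrt_mul (by norm_num) _
  have hs2l : Real.sqrt (2 * (l:ℝ)) = s2 * Real.sqrt l := Real.sqrt_mul (by norm_num) _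
  have hs2n' : Real.sqrt (2 * (n:ℝ)) = s2 * Real.sqrt n := Real.sqrt_mul (by norm_num) _
  have hen : e ^ k * e ^ l = e ^ n := by rw [← pow_add, hkl]
  have eL : e / s2 * (Real.sqrt (2 * (n:ℝ)) * ((n:ℝ) / e) ^ n)
      = e * (Real.sqrt n * (n:ℝ) ^ n) / e ^ n := by
    rw [hs2n', div_pow]
    exact my_algL e s2 (Real.sqrt n) (n:ℝ) n he hs2pos
  have eR : 2 * e * 2 ^ m * (Real.sqrt k)⁻¹ * (1 + s2) ^ k * (A * B)
      = e * (4 * 2 ^ m * (1 + s2) ^ k * Real.sqrt l * ((k:ℝ) ^ k * (l:ℝ) ^ l)) / e ^ n := by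
    rw [hAdef, hBdef, hs2k, hs2l, div_pow, div_pow]
    have h22 : s2 * s2 = 2 := by nlinarith
    exact my_algR e s2 (Real.sqrt k) (Real.sqrt l) (k:ℝ) (l:ℝ) k l m n he hsk h22 hen
  have G : e / s2 * (Real.sqrt (2 * (n:ℝ)) * ((n:ℝ) / e) ^ n)
      ≤ 2 * e * 2 ^ m * (Real.sqrt k)⁻¹ * (1 + s2) ^ k * (A * B) := by
    rw [eL, eR]
    gcongr
  have final : (n.choose k : ℝ) * (A * B)
      ≤ 2 * e * 2 ^ m * (Real.sqrt k)⁻¹ * (1 + s2) ^ k * (A * B) := le_trans step1 G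
  exact le_of_mul_le_mul_right final (by positivity)
end

section
/- The constant 1 + √2 in the binomial bound is optimal: for every real c with 0 < c < 1 + √2 and every constant C > 0, there exist integers m ≥ 1 and k with 1 ≤ k ≤ m such that binom(2m + 1, k) > C · 2^m · k^{−1/2} · c^k. -/
/-- Auxiliary: choice of a large `m`. For `1 < t` and any `A > 0` there is `m ≥ 1` with
`A * (m + 1) < t ^ m`. -/
lemma binom_bound_sharp_aux_m (t A : ℝ) (ht : 1 < t) (hA : 0 < A) :
    ∃ m : ℕ, 1 ≤ m ∧ A * ((m : ℝ) + 1) < t ^ m := by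
  have ht0 : 0 ≤ t := le_of_lt (lt_trans one_pos ht)
  set s := Real.sqrt t with hs
  have hs1 : 1 < s := by
    rw [hs, show (1:ℝ) = Real.sqrt 1 by simp]
    exact Real.sqrt_lt_sqrt (by norm_num) ht
  set ε : ℝ := s - 1 with hε
  have hε0 : 0 < ε := by simp [hε]; linarith
  set δ : ℝ := min ε 1 with hδ
  have hδ0 : 0 < δ := lt_min hε0 one_pos
  have hδ1 : δ ≤ 1 := min_le_right _ _
  have hδε : δ ≤ ε := min_le_left _ _
  refine ⟨max 1 (⌈A / (ε * δ)⌉₊ + 1), le_max_left _ _, ?_⟩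
  set m := max 1 (⌈A / (ε * δ)⌉₊ + 1) with hm
  have hmM : A / (ε * δ) < (m : ℝ) := by
    have h1 : A / (ε * δ) ≤ (⌈A / (ε * δ)⌉₊ : ℝ) := Nat.le_ceil _
    have h2 : (⌈A / (ε * δ)⌉₊ + 1 : ℕ) ≤ m := le_max_right _ _
    have h3 : ((⌈A / (ε * δ)⌉₊ + 1 : ℕ) : ℝ) ≤ (m : ℝ) := by exact_mod_cast h2
    push_cast at h3
    linarith
  have hAm : A < (m : ℝ) * ε * δ := by
    rw [div_lt_iff₀ (by positivity)] at hmM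
    nlinarith
  -- Bernoulli
  have hber : 1 + (m : ℝ) * ε ≤ s ^ m := by
    have := one_add_mul_le_pow (a := ε) (by linarith) m
    simpa [hε] using this
  have hts : t = s ^ 2 := by rw [hs, Real.sq_sqrt ht0]
  have htm : (1 + (m : ℝ) * ε) ^ 2 ≤ t ^ m := by
    have : t ^ m = (s ^ m) ^ 2 := by rw [hts, ← pow_mul, ← pow_mul, Nat.mul_comm]
    rw [this]
    have h0 : 0 ≤ 1 + (m : ℝ) * ε := by positivity
    nlinarith
  -- (1 + mε)^2 ≥ (mε)(1 + mε) ≥ mε (m+1) δ > A (m+1)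
  have hmε0 : 0 ≤ (m : ℝ) * ε := by positivity
  have hkey : ((m : ℝ) + 1) * δ ≤ 1 + (m : ℝ) * ε := by nlinarith
  calc A * ((m : ℝ) + 1) < ((m : ℝ) * ε * δ) * ((m : ℝ) + 1) := by
        have : (0:ℝ) < (m : ℝ) + 1 := by positivity
        nlinarith
    _ = ((m : ℝ) * ε) * (((m : ℝ) + 1) * δ) := by ring
    _ ≤ ((m : ℝ) * ε) * (1 + (m : ℝ) * ε) := by
        apply mul_le_mul_of_nonneg_left hkey hmε0
    _ ≤ (1 + (m : ℝ) * ε) ^ 2 := by nlinarith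
    _ ≤ t ^ m := htm

/-- Main work, for `1 ≤ c`. -/
lemma binom_bound_sharp_aux (c : ℝ) (hc1 : 1 ≤ c) (hc : c < 1 + Real.sqrt 2)
    (C : ℝ) (hC : 0 < C) :
    ∃ m k : ℕ, 1 ≤ m ∧ 1 ≤ k ∧ k ≤ m ∧
      (Nat.choose (2 * m + 1) k : ℝ) > C * 2 ^ m * c ^ k := by
  have hc0 : (0:ℝ) < c := lt_of_lt_of_le one_pos hc1
  obtain ⟨r, hrdef⟩ : ∃ r : ℝ, r = 1 + 1 / c := ⟨_, rfl⟩
  have hr1 : 1 < r := by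
    have : 0 < 1 / c := by positivity
    simp [hrdef]; linarith
  have hr2 : 2 < r ^ 2 := by
    have hsq : Real.sqrt 2 ^ 2 = 2 := Real.sq_sqrt (by norm_num)
    have hs0 : 0 < Real.sqrt 2 := Real.sqrt_pos.mpr (by norm_num)
    have hrc : r * c = c + 1 := by rw [hrdef]; field_simp
    have h1 : c - 1 < Real.sqrt 2 := by linarith
    have h2 : (0:ℝ) < Real.sqrt 2 + (c - 1) := by linarith
    have hlt : (c - 1) ^ 2 < 2 := by nlinarith
    have hrcsq : (c + 1) ^ 2 = r ^ 2 * c ^ 2 := by rw [← hrc]; ring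
    nlinarith [mul_pos hc0 hc0]
  obtain ⟨t, htdef⟩ : ∃ t : ℝ, t = r ^ 2 / 2 := ⟨_, rfl⟩
  have ht1 : 1 < t := by rw [htdef]; linarith
  obtain ⟨D, hDdef⟩ : ∃ D : ℝ, D = max C 1 := ⟨_, rfl⟩
  have hD0 : 0 < D := by rw [hDdef]; exact lt_of_lt_of_le one_pos (le_max_right _ _)
  have hr0 : 0 < r := lt_trans one_pos hr1
  obtain ⟨m, hm1, hmbig⟩ := binom_bound_sharp_aux_m t (2 * D / r) ht1 (by positivity)
  -- hence r * t^m > 2 D (m+1)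
  have hrtm : 2 * D * ((m:ℝ) + 1) < r * t ^ m := by
    rw [div_mul_eq_mul_div, div_lt_iff₀ hr0] at hmbig
    linarith [hmbig]
  obtain ⟨n, hn⟩ : ∃ n : ℕ, n = 2 * m + 1 := ⟨_, rfl⟩
  obtain ⟨a, ha⟩ : ∃ a : ℕ → ℝ, a = fun k => (Nat.choose n k : ℝ) / c ^ k := ⟨_, rfl⟩
  -- total sum equals r ^ n
  have hsum : ∑ k ∈ Finset.range (n + 1), a k = r ^ n := by
    rw [hrdef, add_comm (1:ℝ) (1/c), add_pow]
    apply Finset.sum_congr rfl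
    intro k hk
    simp [ha, div_pow, div_eq_mul_inv, mul_comm]
  -- split and reflect
  have hsplit : ∑ k ∈ Finset.range (n + 1), a k
      = (∑ k ∈ Finset.range (m + 1), a k) + ∑ k ∈ Finset.range (m + 1), a (n - k) := by
    have h1 : n + 1 = (m + 1) + (m + 1) := by omega
    rw [h1, Finset.sum_range_add]
    congr 1
    rw [← Finset.sum_range_reflect (fun i => a (m + 1 + i)) (m + 1)]
    apply Finset.sum_congr rfl
    intro k hk
    simp only [Finset.mem_range] at hk
    congr 1
    omega
  -- reflected terms are bounded by the original ones
  have hrefl : ∑ k ∈ Finset.range (m + 1), a (n - k) ≤ ∑ k ∈ Finset.range (m + 1), a k := by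
    apply Finset.sum_le_sum
    intro k hk
    simp only [Finset.mem_range] at hk
    have hk' : k ≤ n := by omega
    have hch : Nat.choose n (n - k) = Nat.choose n k := Nat.choose_symm hk'
    simp only [ha, hch]
    apply div_le_div_of_nonneg_left (by positivity) (by positivity)
    exact pow_le_pow_right₀ hc1 (by omega)
  have hhalf : r ^ n ≤ 2 * ∑ k ∈ Finset.range (m + 1), a k := by
    rw [← hsum, hsplit]; linarith
  -- pigeonhole
  obtain ⟨k, hkmem, hkbig⟩ := Finset.exists_le_of_sum_le (f := fun _ : ℕ =>
      (∑ k ∈ Finset.range (m + 1), a k) / ((m:ℝ) + 1)) (g := a)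
      (s := Finset.range (m + 1)) ⟨0, Finset.mem_range.mpr (by omega)⟩
      (by
        rw [Finset.sum_const, Finset.card_range, nsmul_eq_mul]
        push_cast
        rw [mul_div_cancel₀]
        positivity)
  simp only [Finset.mem_range] at hkmem
  have hak : r ^ n / (2 * ((m:ℝ) + 1)) ≤ a k := by
    have hm0 : (0:ℝ) < (m:ℝ) + 1 := by positivity
    rw [div_le_iff₀ (by positivity)]
    rw [div_le_iff₀ hm0] at hkbig
    nlinarith
  -- r^n = r * 2^m * t^m
  have hrn : r ^ n = r * 2 ^ m * t ^ m := by
    rw [hn, pow_add, pow_mul, pow_one, htdef]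
    rw [div_pow]  -- (r^2/2)^m = (r^2)^m / 2^m
    field_simp
  have hak2 : D * 2 ^ m < a k := by
    have h2m : (0:ℝ) < (2:ℝ) ^ m := by positivity
    have hm0 : (0:ℝ) < 2 * ((m:ℝ) + 1) := by positivity
    have : D * 2 ^ m < r ^ n / (2 * ((m:ℝ) + 1)) := by
      rw [lt_div_iff₀ hm0, hrn]
      calc D * 2 ^ m * (2 * ((m:ℝ) + 1)) = (2 * D * ((m:ℝ)+1)) * 2 ^ m := by ring
        _ < (r * t ^ m) * 2 ^ m := by exact mul_lt_mul_of_pos_right hrtm h2m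
        _ = r * 2 ^ m * t ^ m := by ring
    linarith
  have hD2 : (1:ℝ) ≤ D * 2 ^ m := by
    have h1 : (1:ℝ) ≤ D := by rw [hDdef]; exact le_max_right _ _
    have h2 : (1:ℝ) ≤ (2:ℝ) ^ m := one_le_pow₀ (by norm_num)
    nlinarith
  have hk1 : 1 ≤ k := by
    by_contra h
    have hk0 : k = 0 := by omega
    have : a 0 = 1 := by simp [ha]
    rw [hk0, this] at hak2
    linarith
  refine ⟨m, k, hm1, hk1, by omega, ?_⟩
  have hfin : (Nat.choose n k : ℝ) = a k * c ^ k := by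
    rw [ha]; field_simp
  rw [hn] at hfin
  rw [hfin]
  have hck : (0:ℝ) < c ^ k := by positivity
  have hCD : C ≤ D := by rw [hDdef]; exact le_max_left _ _
  calc C * 2 ^ m * c ^ k ≤ D * 2 ^ m * c ^ k := by
        apply mul_le_mul_of_nonneg_right _ (le_of_lt hck)
        apply mul_le_mul_of_nonneg_right hCD (by positivity)
    _ < a k * c ^ k := mul_lt_mul_of_pos_right hak2 hck

/-- The constant `1 + √2` in the binomial bound is optimal: for any `0 < c < 1 + √2` and any
`C > 0`, there are `m ≥ 1` and `1 ≤ k ≤ m` with `binom(2m+1, k) > C · 2^m · k^{-1/2} · c^k`. -/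
theorem binom_bound_sharp (c : ℝ) (hc0 : 0 < c) (hc : c < 1 + Real.sqrt 2)
    (C : ℝ) (hC : 0 < C) :
    ∃ m k : ℕ, 1 ≤ m ∧ 1 ≤ k ∧ k ≤ m ∧
      (Nat.choose (2 * m + 1) k : ℝ) >
        C * 2 ^ m * (k : ℝ) ^ (-(1 : ℝ) / 2) * c ^ k := by
  set c' : ℝ := max c 1 with hc'
  have hc'1 : 1 ≤ c' := le_max_right _ _
  have hc'lt : c' < 1 + Real.sqrt 2 := by
    have hs0 : 0 < Real.sqrt 2 := Real.sqrt_pos.mpr (by norm_num)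
    apply max_lt hc (by linarith)
  obtain ⟨m, k, hm, hk, hkm, hbig⟩ := binom_bound_sharp_aux c' hc'1 hc'lt C hC
  refine ⟨m, k, hm, hk, hkm, ?_⟩
  have hkr : (1:ℝ) ≤ (k:ℝ) := by exact_mod_cast hk
  have hrp : (k : ℝ) ^ (-(1 : ℝ) / 2) ≤ 1 :=
    Real.rpow_le_one_of_one_le_of_nonpos hkr (by norm_num)
  have hrp0 : (0:ℝ) < (k : ℝ) ^ (-(1 : ℝ) / 2) :=
    Real.rpow_pos_of_pos (by linarith) _
  have hcc' : c ^ k ≤ c' ^ k := pow_le_pow_left₀ (le_of_lt hc0) (le_max_left _ _) k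
  have h2m : (0:ℝ) < (2:ℝ) ^ m := by positivity
  calc C * 2 ^ m * (k : ℝ) ^ (-(1 : ℝ) / 2) * c ^ k
      ≤ C * 2 ^ m * 1 * c ^ k := by
        apply mul_le_mul_of_nonneg_right _ (by positivity)
        apply mul_le_mul_of_nonneg_left hrp (by positivity)
    _ = C * 2 ^ m * c ^ k := by ring
    _ ≤ C * 2 ^ m * c' ^ k := by
        apply mul_le_mul_of_nonneg_left hcc' (by positivity)
    _ < (Nat.choose (2 * m + 1) k : ℝ) := hbig
end
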